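/- If T is an ergodic measure-preserving transformation of an infinite σ-finite measure space (X, μ) and F is an invertible measure-preserving transformation that equals the identity outside a set of finite measure, then (1/N) Σ_{n=1}^N U_{T^{-n} F T^n} → I strongly on L²(X, μ) as N → ∞; i.e., F is weakly homoclinic for T. -/

import Mathlib

open MeasureTheory Filter Topology

variable {X : Type*} [MeasurableSpace X]

/-- The conjugate `T^{-n} S T^n` of `S` by the `n`-th power of `T` (with inverse `Tinv`),
as a point map. -/
def conjMap (T Tinv S : X → X) (n : ℕ) : X → X :=
  fun x => Tinv^[n] (S (T^[n] x))

/-- `S` is homoclinic for `T` along the filter `L` : the Koopman operators of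
`T^{-n} S T^n` converge strongly to the identity on `L²(X, μ)` along `L`. -/
def HomoclinicAlong (μ : Measure X) (T Tinv S : X → X) (L : Filter ℕ) : Prop :=
  ∀ f : X → ℝ, MemLp f 2 μ →
    Tendsto (fun n => eLpNorm (fun x => f (conjMap T Tinv S n x) - f x) 2 μ) L (𝓝 0)

/-- `S` is an invertible measure-preserving transformation of `(X, μ)`. -/
def InvMP (μ : Measure X) (S : X → X) : Prop :=
  MeasurePreserving S μ μ ∧
    ∃ Sinv : X → X, MeasurePreserving Sinv μ μ ∧
      Function.LeftInverse Sinv S ∧ Function.RightInverse Sinv S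

/-- `S` is weakly homoclinic for `T` : the Cesàro averages `(1/N) Σ_{n=1}^N U_{T^{-n}ST^n}`
converge strongly to the identity on `L²(X, μ)`. -/
def WeakHomoclinic (μ : Measure X) (T Tinv S : X → X) : Prop :=
  ∀ f : X → ℝ, MemLp f 2 μ →
    Tendsto (fun N : ℕ => eLpNorm
        (fun x => (N : ℝ)⁻¹ • (∑ n ∈ Finset.Icc 1 N, f (conjMap T Tinv S n x)) - f x) 2 μ)
      atTop (𝓝 0)

open Function

section Aux


/-- The fixed-point space of the Koopman operator of an ergodic map on an infinite measure
space is trivial. -/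
lemma koopman_fixed_eq_zero (μ : Measure X) (hμ : μ Set.univ = ⊤)
    {T : X → X} (hT : Ergodic T μ) (g : Lp ℝ 2 μ)
    (hg : Lp.compMeasurePreserving T hT.toMeasurePreserving g = g) : g = 0 := by
  have hcomp : (g : X → ℝ) ∘ T =ᵐ[μ] g := by
    have h1 := Lp.coeFn_compMeasurePreserving g hT.toMeasurePreserving
    rw [hg] at h1
    exact h1.symm
  obtain ⟨c, hc⟩ := hT.ae_eq_const_of_ae_eq_comp_ae (Lp.aestronglyMeasurable g) hcomp
  have hc0 : c = 0 := by
    by_contra hne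
    have h1 : eLpNorm (fun _ : X => c) 2 μ = ⊤ := by
      rw [eLpNorm_const c (by norm_num) (by simp [← Measure.measure_univ_eq_zero, hμ])]
      rw [hμ]
      simp [ENNReal.top_rpow_of_pos, hne]
    have h2 : eLpNorm (g : X → ℝ) 2 μ = ⊤ := by
      rw [eLpNorm_congr_ae hc]; exact h1
    exact (Lp.eLpNorm_lt_top g).ne h2
  subst hc0
  exact Lp.ext (hc.trans (Lp.coeFn_zero ℝ 2 μ).symm)

/-- Cesàro averages of the correlations `μ (A ∩ T^[k] ⁻¹' A)` tend to zero for an ergodic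
map of an infinite measure space. -/
lemma cesaro_corr_tendsto_zero (μ : Measure X) (hμ : μ Set.univ = ⊤)
    {T : X → X} (hT : Ergodic T μ) {A : Set X} (hA : MeasurableSet A) (hAfin : μ A ≠ ⊤) :
    Tendsto (fun N : ℕ => (N : ENNReal)⁻¹ * ∑ k ∈ Finset.range N, μ (A ∩ T^[k] ⁻¹' A))
      atTop (𝓝 0) := by
  have hTm := hT.toMeasurePreserving
  set U : Lp ℝ 2 μ →L[ℝ] Lp ℝ 2 μ :=
    (Lp.compMeasurePreservingₗᵢ ℝ T hTm).toContinuousLinearMap with hUdef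
  have hUapp : ∀ g, U g = Lp.compMeasurePreserving T hTm g := fun g => rfl
  have hUnorm : ‖U‖ ≤ 1 :=
    U.opNorm_le_bound zero_le_one fun g => by
      rw [hUapp, Lp.norm_compMeasurePreserving, one_mul]
  -- the set-level data
  have hmeas : ∀ k : ℕ, MeasurableSet (T^[k] ⁻¹' A) := fun k =>
    hA.preimage (hTm.measurable.iterate k)
  have hfin : ∀ k : ℕ, μ (T^[k] ⁻¹' A) ≠ ⊤ := fun k => by
    rw [(hTm.iterate k).measure_preimage hA.nullMeasurableSet]; exact hAfin
  set φ : Lp ℝ 2 μ := indicatorConstLp 2 hA hAfin (1 : ℝ) with hφdef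
  have hiter : ∀ k : ℕ, U^[k] φ = indicatorConstLp 2 (hmeas k) (hfin k) (1 : ℝ) := by
    intro k
    induction k with
    | zero => rfl
    | succ k ih =>
      rw [iterate_succ_apply', ih, hUapp,
        Lp.indicatorConstLp_compMeasurePreserving (hmeas k) (hfin k) (1 : ℝ) hTm]
      rfl
  -- inner products give the correlations
  have hinner : ∀ k : ℕ, (inner ℝ (U^[k] φ) φ : ℝ) = (μ (A ∩ T^[k] ⁻¹' A)).toReal := by
    intro k
    rw [hiter k, L2.inner_indicatorConstLp_one (hmeas k) (hfin k) φ]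
    have h1 : ∀ᵐ x ∂(μ.restrict (T^[k] ⁻¹' A)), (φ : X → ℝ) x = A.indicator 1 x := by
      refine ae_restrict_of_ae ?_
      filter_upwards [indicatorConstLp_coeFn (p := 2) (hs := hA) (hμs := hAfin) (c := (1:ℝ))]
        with x hx
      simpa [Set.indicator] using hx
    rw [integral_congr_ae h1, setIntegral_indicator hA]
    simp only [Pi.one_apply, setIntegral_const, smul_eq_mul, mul_one]
    rw [Set.inter_comm]
    rfl
  -- the mean ergodic theorem
  have hproj := U.tendsto_birkhoffAverage_orthogonalProjection (𝕜 := ℝ) hUnorm φ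
  have hproj0 : (((U.eqLocus (1 : Lp ℝ 2 μ →L[ℝ] Lp ℝ 2 μ)).orthogonalProjectionOnto φ : _) : Lp ℝ 2 μ) = 0 := by
    have hmem := ((U.eqLocus (1 : Lp ℝ 2 μ →L[ℝ] Lp ℝ 2 μ)).orthogonalProjectionOnto φ).2
    rw [LinearMap.mem_eqLocus] at hmem
    exact koopman_fixed_eq_zero μ hμ hT _ hmem
  have hbirk : Tendsto (fun N => birkhoffAverage ℝ U _root_.id N φ) atTop (𝓝 0) := by
    rw [← hproj0]; exact hproj
  -- pass to the inner products
  have htend : Tendsto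
      (fun N : ℕ => (N : ℝ)⁻¹ * ∑ k ∈ Finset.range N, (μ (A ∩ T^[k] ⁻¹' A)).toReal)
      atTop (𝓝 0) := by
    have hcont : Tendsto (fun N : ℕ => (inner ℝ (birkhoffAverage ℝ U _root_.id N φ) φ : ℝ))
        atTop (𝓝 (inner ℝ (0 : Lp ℝ 2 μ) φ)) := hbirk.inner tendsto_const_nhds
    rw [inner_zero_left] at hcont
    have heq : ∀ N : ℕ, (inner ℝ (birkhoffAverage ℝ U _root_.id N φ) φ : ℝ)
        = (N : ℝ)⁻¹ * ∑ k ∈ Finset.range N, (μ (A ∩ T^[k] ⁻¹' A)).toReal := by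
      intro N
      rw [birkhoffAverage, birkhoffSum]
      rw [inner_smul_left, sum_inner]
      simp only [_root_.id]
      rw [Finset.sum_congr rfl fun k _ => hinner k]
      simp
    exact Tendsto.congr heq hcont
  -- transfer to `ℝ≥0∞`
  have hofreal := ENNReal.tendsto_ofReal (a := 0) htend
  rw [ENNReal.ofReal_zero] at hofreal
  refine Tendsto.congr' ?_ hofreal
  filter_upwards [eventually_ge_atTop 1] with N hN
  have hterm : ∀ k ∈ Finset.range N, μ (A ∩ T^[k] ⁻¹' A) ≠ ⊤ := fun k _ =>
    (lt_of_le_of_lt (measure_mono Set.inter_subset_left) hAfin.lt_top).ne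
  have hsum_ne : (∑ k ∈ Finset.range N, μ (A ∩ T^[k] ⁻¹' A)) ≠ ⊤ := by
    rw [ne_eq, ENNReal.sum_eq_top]
    push_neg
    exact hterm
  have hNinv_ne : ((N : ENNReal))⁻¹ ≠ ⊤ := by
    rw [ENNReal.inv_ne_top]
    exact_mod_cast Nat.one_le_iff_ne_zero.mp hN
  rw [← ENNReal.toReal_sum hterm, ← ENNReal.toReal_natCast N, ← ENNReal.toReal_inv,
    ← ENNReal.toReal_mul,
    ENNReal.ofReal_toReal (ENNReal.mul_ne_top hNinv_ne hsum_ne)]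



lemma conjMap_measurePreserving (μ : Measure X) {T Tinv F : X → X}
    (hTm : MeasurePreserving T μ μ) (hTinv : MeasurePreserving Tinv μ μ)
    (hFm : MeasurePreserving F μ μ) (n : ℕ) :
    MeasurePreserving (conjMap T Tinv F n) μ μ :=
  (hTinv.iterate n).comp (hFm.comp (hTm.iterate n))

lemma conjMap_eq_self {T Tinv F : X → X} (hTl : Function.LeftInverse Tinv T)
    {A : Set X} (hAF : ∀ x, x ∉ A → F x = x) {n : ℕ} {x : X} (hx : x ∉ T^[n] ⁻¹' A) :
    conjMap T Tinv F n x = x := by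
  have h1 : F (T^[n] x) = T^[n] x := hAF _ hx
  simp only [conjMap, h1]
  exact hTl.iterate n (x)

/-- The key quadratic estimate: the L²-norm of the Cesàro average of
`g ∘ conjMap n - g` is controlled by the Cesàro average of correlations. -/
lemma bounded_quadratic_estimate (μ : Measure X) {T Tinv F : X → X}
    (hTm : MeasurePreserving T μ μ)
    (hTl : Function.LeftInverse Tinv T)
    {A : Set X} (hA : MeasurableSet A) (hAfin : μ A ≠ ⊤)
    (hAF : ∀ x, x ∉ A → F x = x)
    {g : X → ℝ} (hgm : Measurable g) {M : ℝ} (hM : ∀ x, ‖g x‖ ≤ M)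
    {N : ℕ} (hN : 1 ≤ N) :
    eLpNorm (fun x => (N : ℝ)⁻¹ •
        ∑ n ∈ Finset.Icc 1 N, (g (conjMap T Tinv F n x) - g x)) 2 μ
      ≤ (2 * ENNReal.ofReal (2 * M) ^ 2 *
          ((N : ENNReal)⁻¹ * ∑ k ∈ Finset.range N, μ (A ∩ T^[k] ⁻¹' A))) ^ (1/2 : ℝ) := by
  set c : ENNReal := ENNReal.ofReal (2 * M) with hc
  set B : ℕ → Set X := fun n => T^[n] ⁻¹' A with hB
  have hBmeas : ∀ n, MeasurableSet (B n) := fun n => hA.preimage (hTm.measurable.iterate n)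
  set h : ℕ → X → ℝ := fun n x => g (conjMap T Tinv F n x) - g x with hh
  set u : ℕ → X → ENNReal := fun n => (B n).indicator (fun _ => c) with hu
  have humeas : ∀ n, Measurable (u n) := fun n => measurable_const.indicator (hBmeas n)
  -- pointwise bound on each `h n`
  have hpt : ∀ n x, (‖h n x‖₊ : ENNReal) ≤ u n x := by
    intro n x
    by_cases hx : x ∈ B n
    · have : ‖h n x‖ ≤ 2 * M := by
        calc ‖g (conjMap T Tinv F n x) - g x‖
            ≤ ‖g (conjMap T Tinv F n x)‖ + ‖g x‖ := norm_sub_le _ _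
          _ ≤ M + M := add_le_add (hM _) (hM _)
          _ = 2 * M := by ring
      calc (‖h n x‖₊ : ENNReal) = ENNReal.ofReal ‖h n x‖ := (ofReal_norm_eq_enorm _).symm
        _ ≤ c := by rw [hc]; exact ENNReal.ofReal_le_ofReal this
        _ = u n x := by rw [hu]; simp [Set.indicator_of_mem hx]
    · have : h n x = 0 := by
        rw [hh]; simp [conjMap_eq_self hTl hAF hx]
      rw [this]
      simp
  -- the correlations
  have hcorr : ∀ n m : ℕ, n ≤ m → μ (B n ∩ B m) = μ (A ∩ T^[m - n] ⁻¹' A) := by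
    intro n m hnm
    have hBm : B n ∩ B m = T^[n] ⁻¹' (A ∩ T^[m - n] ⁻¹' A) := by
      rw [hB]
      ext x
      simp only [Set.mem_inter_iff, Set.mem_preimage]
      rw [← Function.iterate_add_apply, Nat.sub_add_cancel hnm]
    rw [hBm]
    exact (hTm.iterate n).measure_preimage
      (hA.inter (hA.preimage (hTm.measurable.iterate (m - n)))).nullMeasurableSet
  -- combinatorial bound on the double sum of correlations
  have hdouble : ∑ n ∈ Finset.Icc 1 N, ∑ m ∈ Finset.Icc 1 N, μ (B n ∩ B m)
      ≤ 2 * N * ∑ k ∈ Finset.range N, μ (A ∩ T^[k] ⁻¹' A) := by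
    have hrow : ∀ n ∈ Finset.Icc 1 N, ∑ m ∈ Finset.Icc 1 N, μ (B n ∩ B m)
        ≤ 2 * ∑ k ∈ Finset.range N, μ (A ∩ T^[k] ⁻¹' A) := by
      intro n hn
      rw [Finset.mem_Icc] at hn
      have hsplit : ∑ m ∈ Finset.Icc 1 N, μ (B n ∩ B m)
          = ∑ m ∈ Finset.Ioc 0 n, μ (B n ∩ B m) + ∑ m ∈ Finset.Ioc n N, μ (B n ∩ B m) := by
        have hIcc : Finset.Icc 1 N = Finset.Ioc 0 N := by
          ext m; simp only [Finset.mem_Icc, Finset.mem_Ioc]; omega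
        rw [hIcc]
        exact (Finset.sum_Ioc_consecutive _ (Nat.zero_le n) hn.2).symm
      rw [hsplit, two_mul]
      refine add_le_add ?_ ?_
      · have he : ∀ m ∈ Finset.Ioc 0 n, μ (B n ∩ B m) = μ (A ∩ T^[n - m] ⁻¹' A) := by
          intro m hm
          rw [Finset.mem_Ioc] at hm
          rw [Set.inter_comm]
          exact hcorr m n hm.2
        rw [Finset.sum_congr rfl he]
        have hinj : ∀ x ∈ Finset.Ioc 0 n, ∀ y ∈ Finset.Ioc 0 n, n - x = n - y → x = y := by
          intro a ha b hb hab
          rw [Finset.mem_Ioc] at ha hb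
          omega
        rw [← Finset.sum_image (f := fun k => μ (A ∩ T^[k] ⁻¹' A)) hinj]
        apply Finset.sum_le_sum_of_subset
        intro k hk
        simp only [Finset.mem_image, Finset.mem_Ioc] at hk
        obtain ⟨m, hm, rfl⟩ := hk
        simp only [Finset.mem_range]
        omega
      · have he : ∀ m ∈ Finset.Ioc n N, μ (B n ∩ B m) = μ (A ∩ T^[m - n] ⁻¹' A) := by
          intro m hm
          rw [Finset.mem_Ioc] at hm
          exact hcorr n m hm.1.le
        rw [Finset.sum_congr rfl he]
        have hinj : ∀ x ∈ Finset.Ioc n N, ∀ y ∈ Finset.Ioc n N, x - n = y - n → x = y := by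
          intro a ha b hb hab
          rw [Finset.mem_Ioc] at ha hb
          omega
        rw [← Finset.sum_image (f := fun k => μ (A ∩ T^[k] ⁻¹' A)) hinj]
        apply Finset.sum_le_sum_of_subset
        intro k hk
        simp only [Finset.mem_image, Finset.mem_Ioc] at hk
        obtain ⟨m, hm, rfl⟩ := hk
        simp only [Finset.mem_range]
        omega
    calc ∑ n ∈ Finset.Icc 1 N, ∑ m ∈ Finset.Icc 1 N, μ (B n ∩ B m)
        ≤ ∑ _n ∈ Finset.Icc 1 N, 2 * ∑ k ∈ Finset.range N, μ (A ∩ T^[k] ⁻¹' A) :=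
          Finset.sum_le_sum hrow
      _ = 2 * N * ∑ k ∈ Finset.range N, μ (A ∩ T^[k] ⁻¹' A) := by
          rw [Finset.sum_const, Nat.card_Icc]
          simp only [Nat.add_sub_cancel, nsmul_eq_mul]
          ring
  -- the analytic chain
  have hSle : ∀ x, (‖∑ n ∈ Finset.Icc 1 N, h n x‖₊ : ENNReal) ≤ ∑ n ∈ Finset.Icc 1 N, u n x := by
    intro x
    calc (‖∑ n ∈ Finset.Icc 1 N, h n x‖₊ : ENNReal)
        ≤ ∑ n ∈ Finset.Icc 1 N, (‖h n x‖₊ : ENNReal) := by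
          exact_mod_cast nnnorm_sum_le _ _
      _ ≤ ∑ n ∈ Finset.Icc 1 N, u n x := Finset.sum_le_sum fun n _ => hpt n x
  have hlint : ∫⁻ x, (‖∑ n ∈ Finset.Icc 1 N, h n x‖₊ : ENNReal) ^ (2:ℝ) ∂μ
      ≤ c ^ 2 * (2 * N * ∑ k ∈ Finset.range N, μ (A ∩ T^[k] ⁻¹' A)) := by
    calc ∫⁻ x, (‖∑ n ∈ Finset.Icc 1 N, h n x‖₊ : ENNReal) ^ (2:ℝ) ∂μ
        ≤ ∫⁻ x, (∑ n ∈ Finset.Icc 1 N, u n x) ^ (2:ℝ) ∂μ :=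
          lintegral_mono fun x => ENNReal.rpow_le_rpow (hSle x) (by norm_num)
      _ = ∫⁻ x, ∑ n ∈ Finset.Icc 1 N, ∑ m ∈ Finset.Icc 1 N, u n x * u m x ∂μ := by
          congr 1; funext x
          rw [show (2:ℝ) = ((2:ℕ):ℝ) by norm_num, ENNReal.rpow_natCast, sq,
            Finset.sum_mul_sum]
      _ = ∑ n ∈ Finset.Icc 1 N, ∑ m ∈ Finset.Icc 1 N, ∫⁻ x, u n x * u m x ∂μ := by
          rw [lintegral_finset_sum (f := fun n x => ∑ m ∈ Finset.Icc 1 N, u n x * u m x) _ fun n _ =>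
            Finset.measurable_sum _ fun m _ => (humeas n).mul (humeas m)]
          exact Finset.sum_congr rfl fun n _ =>
            lintegral_finset_sum _ fun m _ => (humeas n).mul (humeas m)
      _ = ∑ n ∈ Finset.Icc 1 N, ∑ m ∈ Finset.Icc 1 N, c * c * μ (B n ∩ B m) := by
          refine Finset.sum_congr rfl fun n _ => Finset.sum_congr rfl fun m _ => ?_
          have hpoint : ∀ x, u n x * u m x
              = (B n ∩ B m).indicator (fun _ => c * c) x := by
            intro x
            rw [hu]
            exact (Set.inter_indicator_mul (fun _ => c) (fun _ => c) x).symm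
          simp_rw [hpoint]
          rw [lintegral_indicator ((hBmeas n).inter (hBmeas m)), setLIntegral_const]
      _ = c ^ 2 * ∑ n ∈ Finset.Icc 1 N, ∑ m ∈ Finset.Icc 1 N, μ (B n ∩ B m) := by
          rw [Finset.mul_sum]
          exact Finset.sum_congr rfl fun n _ => by
            rw [Finset.mul_sum]
            exact Finset.sum_congr rfl fun m _ => by rw [sq]
      _ ≤ c ^ 2 * (2 * N * ∑ k ∈ Finset.range N, μ (A ∩ T^[k] ⁻¹' A)) :=
          mul_le_mul_right hdouble _
  -- put it together
  have hN0 : (N : ENNReal) ≠ 0 := by exact_mod_cast Nat.one_le_iff_ne_zero.mp hN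
  have hNtop : (N : ENNReal) ≠ ⊤ := ENNReal.natCast_ne_top N
  have hnn : ‖(N:ℝ)⁻¹‖ₑ = (N : ENNReal)⁻¹ := by
    rw [← ofReal_norm_eq_enorm, Real.norm_eq_abs,
      abs_of_nonneg (by positivity : (0:ℝ) ≤ ((N:ℝ))⁻¹),
      ENNReal.ofReal_inv_of_pos (by exact_mod_cast hN), ENNReal.ofReal_natCast]
  have hsmul : (fun x => (N : ℝ)⁻¹ • ∑ n ∈ Finset.Icc 1 N, h n x)
      = (N : ℝ)⁻¹ • (fun x => ∑ n ∈ Finset.Icc 1 N, h n x) := rfl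
  calc eLpNorm (fun x => (N : ℝ)⁻¹ • ∑ n ∈ Finset.Icc 1 N, h n x) 2 μ
      = (N : ENNReal)⁻¹ * eLpNorm (fun x => ∑ n ∈ Finset.Icc 1 N, h n x) 2 μ := by
        rw [hsmul, eLpNorm_const_smul, hnn]
    _ ≤ (N : ENNReal)⁻¹ *
        (c ^ 2 * (2 * N * ∑ k ∈ Finset.range N, μ (A ∩ T^[k] ⁻¹' A))) ^ (1/2 : ℝ) := by
        refine mul_le_mul_right ?_ _
        rw [eLpNorm_eq_lintegral_rpow_enorm_toReal (by norm_num) (by norm_num)]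
        simp only [ENNReal.toReal_ofNat]
        exact ENNReal.rpow_le_rpow hlint (by norm_num)
    _ = (2 * c ^ 2 *
          ((N : ENNReal)⁻¹ * ∑ k ∈ Finset.range N, μ (A ∩ T^[k] ⁻¹' A))) ^ (1/2 : ℝ) := by
        have e1 : (N : ENNReal)⁻¹ *
            (c ^ 2 * (2 * N * ∑ k ∈ Finset.range N, μ (A ∩ T^[k] ⁻¹' A))) ^ (1/2 : ℝ)
            = ((N : ENNReal)⁻¹ ^ 2 *
              (c ^ 2 * (2 * N * ∑ k ∈ Finset.range N, μ (A ∩ T^[k] ⁻¹' A)))) ^ (1/2 : ℝ) := by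
          conv_rhs => rw [ENNReal.mul_rpow_of_nonneg _ _ (by norm_num : (0:ℝ) ≤ 1/2)]
          congr 1
          rw [← ENNReal.rpow_natCast ((N : ENNReal)⁻¹) 2, ← ENNReal.rpow_mul]
          norm_num
        rw [e1]
        congr 1
        rw [sq ((N : ENNReal)⁻¹)]
        calc (N : ENNReal)⁻¹ * (N : ENNReal)⁻¹ *
              (c ^ 2 * (2 * N * ∑ k ∈ Finset.range N, μ (A ∩ T^[k] ⁻¹' A)))
            = 2 * c ^ 2 * (((N : ENNReal)⁻¹ * N) *
                ((N : ENNReal)⁻¹ * ∑ k ∈ Finset.range N, μ (A ∩ T^[k] ⁻¹' A))) := by ring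
          _ = 2 * c ^ 2 *
                ((N : ENNReal)⁻¹ * ∑ k ∈ Finset.range N, μ (A ∩ T^[k] ⁻¹' A)) := by
              rw [ENNReal.inv_mul_cancel hN0 hNtop, one_mul]


/-- `(1/N) Σ_{n=1}^N (g ∘ conjMap n - g) → 0` in `L²` for bounded measurable `g`. -/
lemma bounded_tendsto (μ : Measure X) (hμ : μ Set.univ = ⊤)
    {T Tinv F : X → X} (hT : Ergodic T μ)
    (hTl : Function.LeftInverse Tinv T)
    {A : Set X} (hA : MeasurableSet A) (hAfin : μ A ≠ ⊤)
    (hAF : ∀ x, x ∉ A → F x = x)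
    {g : X → ℝ} (hgm : Measurable g) {M : ℝ} (hM : ∀ x, ‖g x‖ ≤ M) :
    Tendsto (fun N : ℕ => eLpNorm
        (fun x => (N : ℝ)⁻¹ • ∑ n ∈ Finset.Icc 1 N, (g (conjMap T Tinv F n x) - g x)) 2 μ)
      atTop (𝓝 0) := by
  set c : ENNReal := ENNReal.ofReal (2 * M) with hc
  have hc_ne : (2 * c ^ 2 : ENNReal) ≠ ⊤ := by
    rw [hc]
    exact ENNReal.mul_ne_top (by norm_num) (ENNReal.pow_ne_top ENNReal.ofReal_ne_top)
  have hR := cesaro_corr_tendsto_zero μ hμ hT hA hAfin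
  have hR2 : Tendsto (fun N : ℕ => (2 * c ^ 2 *
      ((N : ENNReal)⁻¹ * ∑ k ∈ Finset.range N, μ (A ∩ T^[k] ⁻¹' A))) ^ (1/2 : ℝ))
      atTop (𝓝 0) := by
    have h1 := ENNReal.Tendsto.const_mul hR (Or.inr hc_ne)
    rw [mul_zero] at h1
    have h2 := Filter.Tendsto.ennrpow_const (1/2 : ℝ) h1
    rwa [ENNReal.zero_rpow_of_pos (by norm_num)] at h2
  refine tendsto_of_tendsto_of_tendsto_of_le_of_le' tendsto_const_nhds hR2
    (Eventually.of_forall fun N => by positivity) ?_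
  filter_upwards [eventually_ge_atTop 1] with N hN
  exact bounded_quadratic_estimate μ hT.toMeasurePreserving hTl hA hAfin hAF hgm hM hN

end Aux

/-- If `T` is an ergodic invertible measure-preserving transformation of an infinite
σ-finite measure space and the invertible measure-preserving `F` equals the identity
outside a set of finite measure, then `F` is weakly homoclinic for `T`. -/
theorem finite_support_is_weakly_homoclinic (μ : Measure X) [SigmaFinite μ]
    (hμ : μ Set.univ = ⊤)
    (T Tinv : X → X) (hT : Ergodic T μ) (hTinv : MeasurePreserving Tinv μ μ)
    (hTl : Function.LeftInverse Tinv T) (hTr : Function.RightInverse Tinv T)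
    (F : X → X) (hF : InvMP μ F) (hFsupp : μ {x | F x ≠ x} < ⊤) :
    WeakHomoclinic μ T Tinv F := by
  obtain ⟨hFm, -⟩ := hF
  intro f hf
  obtain ⟨A, hAsub, hA, hAμ⟩ := exists_measurable_superset μ {x | F x ≠ x}
  have hAfin : μ A ≠ ⊤ := by rw [hAμ]; exact hFsupp.ne
  have hAF : ∀ x, x ∉ A → F x = x := fun x hx => by
    by_contra hne
    exact hx (hAsub hne)
  have hTm := hT.toMeasurePreserving
  have hCmp : ∀ n, MeasurePreserving (conjMap T Tinv F n) μ μ :=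
    conjMap_measurePreserving μ hTm hTinv hFm
  rw [ENNReal.tendsto_nhds_zero]
  intro ε hε
  have hε4 : ε / 4 ≠ 0 := by
    simp only [ne_eq, ENNReal.div_eq_zero_iff, not_or]
    exact ⟨hε.ne', by norm_num⟩
  obtain ⟨g, hg_lt, -⟩ := hf.exists_simpleFunc_eLpNorm_sub_lt (by norm_num) hε4
  obtain ⟨M, hM⟩ := g.exists_forall_norm_le
  have hgt := bounded_tendsto μ hμ hT hTl hA hAfin hAF g.measurable hM
  have hev := (ENNReal.tendsto_nhds_zero.mp hgt) (ε / 2)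
    (by simp only [gt_iff_lt, ENNReal.div_pos_iff]; exact ⟨hε.ne', by norm_num⟩)
  have hd : AEStronglyMeasurable (f - ⇑g) μ :=
    hf.aestronglyMeasurable.sub g.stronglyMeasurable.aestronglyMeasurable
  have hdC : ∀ n, AEStronglyMeasurable (fun x => (f - ⇑g) (conjMap T Tinv F n x)) μ :=
    fun n => hd.comp_quasiMeasurePreserving (hCmp n).quasiMeasurePreserving
  filter_upwards [hev, eventually_ge_atTop 1] with N hN2 hN1
  have hN0 : (N : ℝ) ≠ 0 := by
    have : (0:ℕ) < N := hN1
    exact_mod_cast this.ne'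
  -- pointwise decomposition
  set u1 : X → ℝ := fun x => (N : ℝ)⁻¹ • ∑ n ∈ Finset.Icc 1 N, (f - ⇑g) (conjMap T Tinv F n x)
    with hu1
  set u2 : X → ℝ := fun x => (N : ℝ)⁻¹ • ∑ n ∈ Finset.Icc 1 N, (g (conjMap T Tinv F n x) - g x)
    with hu2
  set u3 : X → ℝ := fun x => g x - f x with hu3
  have hid : (fun x => (N : ℝ)⁻¹ • (∑ n ∈ Finset.Icc 1 N, f (conjMap T Tinv F n x)) - f x)
      = fun x => u1 x + u2 x + u3 x := by
    funext x
    rw [hu1, hu2, hu3]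
    simp only [Pi.sub_apply, smul_eq_mul, Finset.mul_sum, mul_sub]
    rw [Finset.sum_sub_distrib, Finset.sum_sub_distrib, Finset.sum_const, Nat.card_Icc,
      Nat.add_sub_cancel, nsmul_eq_mul]
    have hgx : (N:ℝ) * ((N:ℝ)⁻¹ * g x) = g x := by field_simp
    rw [hgx]
    ring
  rw [hid]
  -- triangle inequality
  have htri : eLpNorm (fun x => u1 x + u2 x + u3 x) 2 μ
      ≤ eLpNorm u1 2 μ + eLpNorm u2 2 μ + eLpNorm u3 2 μ := by
    have h12 : AEStronglyMeasurable u1 μ := by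
      rw [hu1]
      have := (Finset.aestronglyMeasurable_fun_sum (μ := μ) (Finset.Icc 1 N)
        (fun n _ => hdC n)).const_smul ((N:ℝ)⁻¹)
      exact this
    have h22 : AEStronglyMeasurable u2 μ := by
      rw [hu2]
      have := (Finset.aestronglyMeasurable_fun_sum (μ := μ) (Finset.Icc 1 N)
        (fun n _ => ((g.measurable.comp (hCmp n).measurable).sub
          g.measurable).stronglyMeasurable.aestronglyMeasurable)).const_smul ((N:ℝ)⁻¹)
      exact this
    have h32 : AEStronglyMeasurable u3 μ := by
      rw [hu3]
      exact g.stronglyMeasurable.aestronglyMeasurable.sub hf.aestronglyMeasurable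
    calc eLpNorm (fun x => u1 x + u2 x + u3 x) 2 μ
        ≤ eLpNorm (fun x => u1 x + u2 x) 2 μ + eLpNorm u3 2 μ :=
          eLpNorm_add_le (h12.add h22) h32 (by norm_num)
      _ ≤ eLpNorm u1 2 μ + eLpNorm u2 2 μ + eLpNorm u3 2 μ :=
          add_le_add_left (eLpNorm_add_le h12 h22 (by norm_num)) _
  -- bound each term
  have h1le : eLpNorm u1 2 μ ≤ ε / 4 := by
    have hNn : ‖(N:ℝ)⁻¹‖ₑ = (N : ENNReal)⁻¹ := by
      rw [← ofReal_norm_eq_enorm, Real.norm_eq_abs,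
        abs_of_nonneg (by positivity : (0:ℝ) ≤ ((N:ℝ))⁻¹),
        ENNReal.ofReal_inv_of_pos (by exact_mod_cast hN1), ENNReal.ofReal_natCast]
    have hfs : (fun x => ∑ n ∈ Finset.Icc 1 N, (f - ⇑g) (conjMap T Tinv F n x))
        = ∑ n ∈ Finset.Icc 1 N, (fun x => (f - ⇑g) (conjMap T Tinv F n x)) := by
      funext x; simp
    have step : eLpNorm u1 2 μ ≤ (N : ENNReal)⁻¹ * (N * eLpNorm (f - ⇑g) 2 μ) := by
      rw [hu1, show (fun x => (N : ℝ)⁻¹ • ∑ n ∈ Finset.Icc 1 N, (f - ⇑g) (conjMap T Tinv F n x))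
          = (N : ℝ)⁻¹ • (fun x => ∑ n ∈ Finset.Icc 1 N, (f - ⇑g) (conjMap T Tinv F n x))
          from rfl, eLpNorm_const_smul, hNn]
      refine mul_le_mul_right ?_ _
      rw [hfs]
      refine le_trans (eLpNorm_sum_le (fun n _ => hdC n) (by norm_num)) ?_
      have heach : ∀ n ∈ Finset.Icc 1 N,
          eLpNorm (fun x => (f - ⇑g) (conjMap T Tinv F n x)) 2 μ
            = eLpNorm (f - ⇑g) 2 μ := fun n _ =>
        eLpNorm_comp_measurePreserving hd (hCmp n)
      rw [Finset.sum_congr rfl heach, Finset.sum_const, Nat.card_Icc, Nat.add_sub_cancel,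
        nsmul_eq_mul]
    refine le_trans step ?_
    rw [← mul_assoc, ENNReal.inv_mul_cancel (by exact_mod_cast Nat.one_le_iff_ne_zero.mp hN1)
      (ENNReal.natCast_ne_top N), one_mul]
    exact hg_lt.le
  have h3le : eLpNorm u3 2 μ ≤ ε / 4 := by
    have : eLpNorm u3 2 μ = eLpNorm (f - ⇑g) 2 μ := by
      rw [hu3, show (fun x => g x - f x) = -(f - ⇑g) from by funext x; simp, eLpNorm_neg]
    rw [this]
    exact hg_lt.le
  refine le_trans htri ?_
  calc eLpNorm u1 2 μ + eLpNorm u2 2 μ + eLpNorm u3 2 μ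
      ≤ ε / 4 + ε / 2 + ε / 4 := add_le_add (add_le_add h1le hN2) h3le
    _ = ε / 4 + ε / 4 + ε / 2 := by rw [add_right_comm]
    _ = (ε + ε) / 4 + ε / 2 := by rw [ENNReal.div_add_div_same]
    _ = (2 * ε) / (2 * 2) + ε / 2 := by rw [two_mul]; norm_num
    _ = ε / 2 + ε / 2 := by rw [ENNReal.mul_div_mul_left _ _ two_ne_zero ENNReal.ofNat_ne_top]
    _ = ε := ENNReal.add_halves ε
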